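/- Let p be an odd prime and let b ∈ ZMod p with b ≠ 0. The permutation π⁻¹ ∘ π_{(0,b)} of ZMod p × ZMod p has exactly one fixed point, namely (0, b·(x−1)⁻¹), and exactly two orbits of size at least 2: one orbit is precisely the set {(c, b·(x−1)⁻¹) : c ∈ ZMod p, c ≠ 0} of size p − 1, and the other orbit has size p² − p and contains (0,0). -/

import Mathlib

/-- The map `π_{(a,b)}` on `ZMod p × ZMod p` (with `x` a fixed primitive root mod `p`). -/
def piab {p : ℕ} (x a b : ZMod p) : ZMod p × ZMod p → ZMod p × ZMod p :=
  fun cd =>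
    if cd.1 = 0 then
      if a + b + cd.2 ≠ 0 then (a, a + b + cd.2) else (a + x * b, 0)
    else
      if b + cd.2 = 0 then (a + cd.1 + x * b, 0) else (a + cd.1, b + cd.2)

/-- The composite `π⁻¹ ∘ π_{(a,b)}`, where `π(c,d) = (x⁻¹·c, x·d)`,
so `π⁻¹(c,d) = (x·c, x⁻¹·d)`. -/
def piInvPiab {p : ℕ} (x a b : ZMod p) : ZMod p × ZMod p → ZMod p × ZMod p :=
  fun cd => (x * (piab x a b cd).1, x⁻¹ * (piab x a b cd).2)

/-- The orbit of `u` under `f`: the set `{fᵏ(u) : k ∈ ℕ}`. -/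
def orbit {α : Type*} (f : α → α) (u : α) : Set α :=
  {v | ∃ k : ℕ, f^[k] u = v}

/-- The set `𝓘⁽²⁾ = {(0,1), (1,0)} ∪ {(z,z) : z ≠ 0} ∪ {(z, z·x) : z ≠ 0}`. -/
def I2 (p : ℕ) (x : ZMod p) : Set (ZMod p × ZMod p) :=
  {q | q = (0, 1) ∨ q = (1, 0) ∨ (q.1 ≠ 0 ∧ q.2 = q.1) ∨ (q.1 ≠ 0 ∧ q.2 = q.1 * x)}

/-- If `v` lies on the orbit of `u` under an injective self-map of a finite type,
then the two orbits coincide. -/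
lemma orbit_eq_orbit_of_mem {α : Type*} [Finite α] {f : α → α}
    (hf : Function.Injective f) {u v : α} (h : v ∈ orbit f u) :
    orbit f v = orbit f u := by
  obtain ⟨k, hk⟩ := h
  have hbij : Function.Bijective f := Finite.injective_iff_bijective.mp hf
  let e : Equiv.Perm α := Equiv.ofBijective f hbij
  have hcoe : ∀ n : ℕ, ⇑(e ^ n) = f^[n] := by
    intro n
    rw [Equiv.Perm.coe_pow]
    rfl
  have hN : ∃ N : ℕ, 0 < N ∧ f^[N] = id := by
    refine ⟨orderOf e, ?_, ?_⟩
    · exact orderOf_pos e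
    · rw [← hcoe, pow_orderOf_eq_one]; rfl
  obtain ⟨N, hNpos, hNid⟩ := hN
  have hu : u ∈ orbit f v := by
    refine ⟨k * N - k, ?_⟩
    rw [← hk, ← Function.iterate_add_apply]
    have h1 : k * N - k + k = k * N := by
      have : k ≤ k * N := Nat.le_mul_of_pos_right k hNpos
      omega
    rw [h1]
    have h2 : f^[k * N] = id := by
      rw [mul_comm, Function.iterate_mul, hNid]
      simp [Function.iterate_fixed]
    rw [h2]; rfl
  obtain ⟨m, hm⟩ := hu
  ext w
  constructor
  · rintro ⟨j, rfl⟩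
    exact ⟨j + k, by rw [Function.iterate_add_apply, hk]⟩
  · rintro ⟨j, rfl⟩
    exact ⟨j + m, by rw [Function.iterate_add_apply, hm]⟩

theorem stmt14 (p : ℕ) (hp : p.Prime) (hodd : Odd p) (x : ZMod p)
    (hx : ∀ z : ZMod p, z ≠ 0 → ∃ k : ℕ, x ^ k = z) (b : ZMod p) (hb : b ≠ 0) :
    (∀ cd : ZMod p × ZMod p,
      piInvPiab x 0 b cd = cd ↔ cd = (0, b * (x - 1)⁻¹)) ∧
    ∃ u v : ZMod p × ZMod p,
      orbit (piInvPiab x 0 b) u =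
        {q : ZMod p × ZMod p | q.1 ≠ 0 ∧ q.2 = b * (x - 1)⁻¹} ∧
      (orbit (piInvPiab x 0 b) u).ncard = p - 1 ∧
      (orbit (piInvPiab x 0 b) v).ncard = p ^ 2 - p ∧
      (0, 0) ∈ orbit (piInvPiab x 0 b) v ∧
      ∀ w : ZMod p × ZMod p, 2 ≤ (orbit (piInvPiab x 0 b) w).ncard →
        orbit (piInvPiab x 0 b) w = orbit (piInvPiab x 0 b) u ∨
        orbit (piInvPiab x 0 b) w = orbit (piInvPiab x 0 b) v := by
  haveI : Fact p.Prime := ⟨hp⟩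
  have hp3 : 3 ≤ p := by
    obtain ⟨m, hm⟩ := hodd
    have h2 := hp.two_le
    omega
  -- basic facts about x
  have h2ne : (2 : ZMod p) ≠ 0 := by
    intro h
    have : ((2 : ℕ) : ZMod p) = 0 := by exact_mod_cast h
    have := (ZMod.natCast_eq_zero_iff 2 p).mp this
    have := Nat.le_of_dvd (by norm_num) this
    omega
  have h21 : (2 : ZMod p) ≠ 1 := by
    intro h
    have : (2 : ZMod p) - 1 = 0 := by rw [h]; ring
    have : (1 : ZMod p) = 0 := by linear_combination this
    exact one_ne_zero this
  have hx0 : x ≠ 0 := by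
    rintro rfl
    obtain ⟨k, hk⟩ := hx 2 h2ne
    cases k with
    | zero => simp at hk; exact h21 hk.symm
    | succ m => rw [pow_succ, mul_zero] at hk; exact h2ne hk.symm
  have hx1 : x ≠ 1 := by
    rintro rfl
    obtain ⟨k, hk⟩ := hx 2 h2ne
    rw [one_pow] at hk
    exact h21 hk.symm
  -- order of x is p - 1
  have hord : orderOf x = p - 1 := by
    have hxu : IsUnit x := hx0.isUnit
    have hu : ∀ z : (ZMod p)ˣ, z ∈ Subgroup.zpowers hxu.unit := by
      intro z
      obtain ⟨k, hk⟩ := hx (z : ZMod p) (Units.ne_zero z)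
      refine ⟨(k : ℤ), ?_⟩
      have : ((hxu.unit ^ (k : ℤ) : (ZMod p)ˣ) : ZMod p) = (z : ZMod p) := by
        rw [zpow_natCast, Units.val_pow_eq_pow_val, hxu.unit_spec, hk]
      exact Units.ext this
    have h1 := orderOf_eq_card_of_forall_mem_zpowers hu
    have h2 : Nat.card (ZMod p)ˣ = p - 1 := by
      rw [Nat.card_eq_fintype_card, ZMod.card_units]
    have h3 : orderOf (hxu.unit : ZMod p) = orderOf hxu.unit := orderOf_units
    rw [hxu.unit_spec] at h3
    rw [h3, h1, h2]
  have hx_pow : x ^ (p - 1) = 1 := by rw [← hord]; exact pow_orderOf_eq_one x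
  have hx_ne_one : ∀ m : ℕ, 0 < m → m < p - 1 → x ^ m ≠ 1 := by
    intro m hm1 hm2 h
    have := orderOf_dvd_of_pow_eq_one h
    rw [hord] at this
    have := Nat.le_of_dvd hm1 this
    omega
  have hxm1 : x - 1 ≠ 0 := sub_ne_zero.mpr hx1
  set d0 : ZMod p := b * (x - 1)⁻¹ with hd0def
  have hd0 : d0 ≠ 0 := mul_ne_zero hb (inv_ne_zero hxm1)
  have hbd0 : b + d0 = x * d0 := by
    rw [hd0def]
    field_simp
    ring
  set f := piInvPiab x 0 b with hfdef
  -- uniform formula for f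
  have hF : ∀ cd : ZMod p × ZMod p,
      f cd = if b + cd.2 = 0 then (x * (cd.1 + x * b), 0) else (x * cd.1, x⁻¹ * (b + cd.2)) := by
    rintro ⟨c, d⟩
    simp only [hfdef, piInvPiab, piab, zero_add]
    by_cases hc : c = 0 <;> by_cases hd : b + d = 0 <;>
      simp [hc, hd]
  -- fixed points
  have part1 : ∀ cd : ZMod p × ZMod p, f cd = cd ↔ cd = (0, d0) := by
    rintro ⟨c, d⟩
    rw [hF]
    constructor
    · intro h
      by_cases hd : b + d = 0
      · rw [if_pos hd] at h
        have h2 : d = 0 := ((Prod.mk.injEq _ _ _ _).mp h).2.symm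
        rw [h2, add_zero] at hd
        exact absurd hd hb
      · rw [if_neg hd] at h
        obtain ⟨h1, h2⟩ := (Prod.mk.injEq _ _ _ _).mp h
        have hc0 : c = 0 := by
          have : (x - 1) * c = 0 := by linear_combination h1
          rcases mul_eq_zero.mp this with h' | h'
          · exact absurd h' hxm1
          · exact h'
        have hd' : d = d0 := by
          have hxx : x⁻¹ * x = 1 := inv_mul_cancel₀ hx0
          have h3 : b + d = x * d := by
            have := h2
            calc b + d = x * (x⁻¹ * (b + d)) := by
                  rw [← mul_assoc, mul_inv_cancel₀ hx0, one_mul]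
              _ = x * d := by rw [this]
          have h4 : (x - 1) * d = b := by linear_combination -h3
          rw [hd0def, ← h4]
          field_simp
        rw [hc0, hd']
    · intro h
      rw [Prod.mk.injEq] at h
      obtain ⟨hc, hd⟩ := h
      subst hc; subst hd
      simp only
      rw [if_neg (by rw [hbd0]; exact mul_ne_zero hx0 hd0)]
      rw [hbd0, mul_zero, ← mul_assoc, inv_mul_cancel₀ hx0, one_mul]
  -- the line orbit
  have hstep0 : ∀ c : ZMod p, f (c, d0) = (x * c, d0) := by
    intro c
    rw [hF]
    simp only
    rw [if_neg (by rw [hbd0]; exact mul_ne_zero hx0 hd0)]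
    rw [hbd0, ← mul_assoc, inv_mul_cancel₀ hx0, one_mul]
  have hiter_line : ∀ (c : ZMod p) (k : ℕ), f^[k] (c, d0) = (x ^ k * c, d0) := by
    intro c k
    induction k with
    | zero => simp
    | succ m ih =>
      rw [Function.iterate_succ_apply', ih, hstep0]
      rw [Prod.mk.injEq]
      exact ⟨by ring, rfl⟩
  have horb_line : ∀ c : ZMod p, c ≠ 0 →
      orbit f (c, d0) = {q : ZMod p × ZMod p | q.1 ≠ 0 ∧ q.2 = d0} := by
    intro c hc
    ext ⟨c', d'⟩
    simp only [orbit, Set.mem_setOf_eq]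
    constructor
    · rintro ⟨k, hk⟩
      rw [hiter_line] at hk
      obtain ⟨h1, h2⟩ := (Prod.mk.injEq _ _ _ _).mp hk
      exact ⟨h1 ▸ mul_ne_zero (pow_ne_zero k hx0) hc, h2.symm⟩
    · rintro ⟨hc', hd'⟩
      obtain ⟨k, hk⟩ := hx (c' * c⁻¹) (mul_ne_zero hc' (inv_ne_zero hc))
      refine ⟨k, ?_⟩
      rw [hiter_line, hk, Prod.mk.injEq]
      constructor
      · field_simp
      · exact hd'.symm
  -- the big orbit through (0,0)
  set n := p - 1 with hn
  have hnpos : 0 < n := by omega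
  have hn2 : 2 ≤ n := by omega
  set Phi : ℕ → ZMod p × ZMod p := fun k =>
    (((k / n : ℕ) : ZMod p) * (x ^ 2 * b) * x ^ (k % n),
      d0 * (1 - x⁻¹ ^ (k % n))) with hPhidef
  have hPhi : ∀ k : ℕ, f^[k] (0, 0) = Phi k := by
    intro k
    induction k with
    | zero =>
      simp [hPhidef, Nat.zero_mod, Nat.zero_div]
    | succ m ih =>
      rw [Function.iterate_succ_apply', ih, hF, hPhidef]
      simp only
      set j := m % n with hj
      set q := m / n with hq
      have hjlt : j < n := Nat.mod_lt m hnpos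
      by_cases hcase : j + 1 < n
      · -- within a block
        have hmod : (m + 1) % n = j + 1 := by
          conv_lhs => rw [Nat.add_mod]
          rw [Nat.mod_eq_of_lt (show 1 < n by omega), ← hj, Nat.mod_eq_of_lt hcase]
        have hdiv : (m + 1) / n = q := by
          have e2 := Nat.div_add_mod (m + 1) n
          rw [hmod] at e2
          have e1' : n * (m / n) + (j + 1) = m + 1 := by
            rw [hj, ← Nat.add_assoc, Nat.div_add_mod]
          have h4 : n * ((m + 1) / n) + (j + 1) = n * (m / n) + (j + 1) := by
            rw [e2, e1']
          exact Nat.eq_of_mul_eq_mul_left hnpos (Nat.add_right_cancel h4)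
        have hne : b + d0 * (1 - x⁻¹ ^ j) ≠ 0 := by
          intro heq
          have h2 : d0 * (x - x⁻¹ ^ j) = 0 := by linear_combination heq - hbd0
          rcases mul_eq_zero.mp h2 with h' | h'
          · exact hd0 h'
          · have hxeq : x = x⁻¹ ^ j := by linear_combination h'
            have hxj : x ^ (j + 1) = 1 := by
              have h3 : x ^ j * x⁻¹ ^ j = 1 := by
                rw [← mul_pow, mul_inv_cancel₀ hx0, one_pow]
              calc x ^ (j + 1) = x ^ j * x := pow_succ x j
                _ = x ^ j * x⁻¹ ^ j := by rw [← hxeq]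
                _ = 1 := h3
            exact hx_ne_one (j + 1) (Nat.succ_pos j) (by omega) hxj
        rw [if_neg hne, hmod, hdiv, Prod.mk.injEq]
        constructor
        · rw [pow_succ]; ring
        · have hxx : x⁻¹ * x = 1 := inv_mul_cancel₀ hx0
          rw [pow_succ]
          linear_combination x⁻¹ * hbd0 + d0 * hxx
      · -- block transition: j + 1 = n
        have hjeq : j + 1 = n := by omega
        have hmod : (m + 1) % n = 0 := by
          conv_lhs => rw [Nat.add_mod]
          rw [Nat.mod_eq_of_lt (show 1 < n by omega), ← hj, hjeq, Nat.mod_self]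
        have hdiv : (m + 1) / n = q + 1 := by
          have e2 := Nat.div_add_mod (m + 1) n
          rw [hmod, Nat.add_zero] at e2
          have e1' : n * (m / n + 1) = m + 1 := by
            rw [Nat.mul_add, Nat.mul_one]
            conv_rhs => rw [← Nat.div_add_mod m n, ← hj]
            rw [Nat.add_assoc, hjeq]
          have h4 : n * ((m + 1) / n) = n * (m / n + 1) := by rw [e2, e1']
          exact Nat.eq_of_mul_eq_mul_left hnpos h4
        -- x ^ j = x⁻¹
        have hxj : x ^ j = x⁻¹ := by
          have h3 : x ^ j * x = 1 := by
            rw [← pow_succ, hjeq, hn]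
            exact hx_pow
          field_simp
          linear_combination h3
        have hxinvj : x⁻¹ ^ j = x := by
          rw [inv_pow, hxj, inv_inv]
        have hzero : b + d0 * (1 - x⁻¹ ^ j) = 0 := by
          rw [hxinvj]
          linear_combination hbd0
        rw [if_pos hzero, hmod, hdiv, Prod.mk.injEq]
        have hxx : x * x ^ j = 1 := by
          rw [hxj, mul_inv_cancel₀ hx0]
        constructor
        · push_cast
          rw [pow_zero]
          linear_combination ((q : ZMod p) * x ^ 2 * b) * hxx
        · rw [pow_zero]
          simp
  have horbS : orbit f (0, 0) = {q : ZMod p × ZMod p | q.2 ≠ d0} := by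
    ext ⟨c, d⟩
    simp only [orbit, Set.mem_setOf_eq]
    constructor
    · rintro ⟨k, hk⟩
      rw [hPhi, hPhidef] at hk
      obtain ⟨h1, h2⟩ := (Prod.mk.injEq _ _ _ _).mp hk
      intro hdd
      rw [hdd] at h2
      have h3 : d0 * x⁻¹ ^ (k % n) = 0 := by linear_combination -h2
      rcases mul_eq_zero.mp h3 with h' | h'
      · exact hd0 h'
      · exact pow_ne_zero _ (inv_ne_zero hx0) h'
    · intro hd
      have hdne : d0 - d ≠ 0 := sub_ne_zero.mpr (Ne.symm hd)
      set t : ZMod p := (d0 - d) * d0⁻¹ with htdef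
      have ht : t ≠ 0 := mul_ne_zero hdne (inv_ne_zero hd0)
      obtain ⟨k0, hk0⟩ := hx t⁻¹ (inv_ne_zero ht)
      have hxinvk0 : x⁻¹ ^ k0 = t := by
        rw [inv_pow, hk0, inv_inv]
      have hxinvn : x⁻¹ ^ n = 1 := by
        rw [inv_pow, hn, hx_pow, inv_one]
      set j := k0 % n with hjdef
      have hjlt : j < n := Nat.mod_lt k0 hnpos
      have hxj : x⁻¹ ^ j = t := by
        have : x⁻¹ ^ k0 = x⁻¹ ^ (n * (k0 / n) + j) := by
          rw [Nat.div_add_mod]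
        rw [pow_add, pow_mul, hxinvn, one_pow, one_mul] at this
        rw [← this, hxinvk0]
      have hdj : d0 * (1 - x⁻¹ ^ j) = d := by
        rw [hxj, htdef]
        linear_combination (d - d0) * (inv_mul_cancel₀ hd0)
      by_cases hc : c = 0
      · refine ⟨j, ?_⟩
        rw [hPhi, hPhidef]
        simp only
        rw [Nat.mod_eq_of_lt hjlt, Nat.div_eq_of_lt hjlt, hdj, hc]
        simp
      · set w : ZMod p := c * (x ^ 2 * b)⁻¹ * (x ^ j)⁻¹ with hwdef
        refine ⟨w.val * n + j, ?_⟩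
        rw [hPhi, hPhidef]
        simp only
        have hmod : (w.val * n + j) % n = j := by
          rw [Nat.add_comm, Nat.add_mul_mod_self_right, Nat.mod_eq_of_lt hjlt]
        have hdiv : (w.val * n + j) / n = w.val := by
          rw [Nat.add_comm, Nat.add_mul_div_right _ _ hnpos, Nat.div_eq_of_lt hjlt, zero_add]
        rw [hmod, hdiv, hdj, ZMod.natCast_rightInverse w, hwdef, Prod.mk.injEq]
        refine ⟨?_, rfl⟩
        have hx2b : x ^ 2 * b ≠ 0 := mul_ne_zero (pow_ne_zero 2 hx0) hb
        have hxjne : x ^ j ≠ 0 := pow_ne_zero j hx0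
        field_simp
  -- cardinalities
  have hcard_line : ({q : ZMod p × ZMod p | q.1 ≠ 0 ∧ q.2 = d0}).ncard = p - 1 := by
    have himg : {q : ZMod p × ZMod p | q.1 ≠ 0 ∧ q.2 = d0} =
        (fun c : ZMod p => (c, d0)) '' {c : ZMod p | c ≠ 0} := by
      ext ⟨c, d⟩
      simp only [Set.mem_setOf_eq, Set.mem_image]
      constructor
      · rintro ⟨hc, hd⟩
        exact ⟨c, hc, by rw [hd]⟩
      · rintro ⟨a, ha, h⟩
        obtain ⟨h1, h2⟩ := (Prod.mk.injEq _ _ _ _).mp h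
        exact ⟨h1 ▸ ha, h2.symm⟩
    rw [himg, Set.ncard_image_of_injective _
      (fun a a' h => ((Prod.mk.injEq _ _ _ _).mp h).1)]
    have heq : {c : ZMod p | c ≠ 0} = ({0} : Set (ZMod p))ᶜ := by
      ext c; simp
    rw [heq]
    have hsum := Set.ncard_add_ncard_compl ({0} : Set (ZMod p))
    rw [Set.ncard_singleton, Nat.card_zmod] at hsum
    omega
  have hcard_S : ({q : ZMod p × ZMod p | q.2 ≠ d0}).ncard = p ^ 2 - p := by
    have heq : {q : ZMod p × ZMod p | q.2 ≠ d0} = ({q : ZMod p × ZMod p | q.2 = d0})ᶜ := by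
      ext q; simp
    have himg : {q : ZMod p × ZMod p | q.2 = d0} =
        (fun c : ZMod p => (c, d0)) '' Set.univ := by
      ext ⟨c, d⟩
      simp only [Set.mem_setOf_eq, Set.image_univ, Set.mem_range]
      constructor
      · rintro hd
        exact ⟨c, by rw [hd]⟩
      · rintro ⟨a, h⟩
        exact ((Prod.mk.injEq _ _ _ _).mp h).2.symm
    have hcard1 : ({q : ZMod p × ZMod p | q.2 = d0}).ncard = p := by
      rw [himg, Set.ncard_image_of_injective _
        (fun a a' h => ((Prod.mk.injEq _ _ _ _).mp h).1),
        Set.ncard_univ, Nat.card_zmod]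
    have hsum := Set.ncard_add_ncard_compl ({q : ZMod p × ZMod p | q.2 = d0})
    rw [hcard1, Nat.card_prod, Nat.card_zmod] at hsum
    have hpp : p ^ 2 = p * p := sq p
    rw [heq]
    omega
  -- injectivity of f
  have hinj : Function.Injective f := by
    rintro ⟨c, d⟩ ⟨c', d'⟩ h
    rw [hF, hF] at h
    simp only at h
    by_cases h1 : b + d = 0 <;> by_cases h2 : b + d' = 0
    · rw [if_pos h1, if_pos h2] at h
      obtain ⟨ha, _⟩ := (Prod.mk.injEq _ _ _ _).mp h
      have hcc : c = c' := by
        have : x * c + x * (x * b) = x * c' + x * (x * b) := by linear_combination ha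
        have h3 : x * c = x * c' := by linear_combination this
        exact mul_left_cancel₀ hx0 h3
      have hdd : d = d' := by
        have : d = -b := by linear_combination h1
        have h4 : d' = -b := by linear_combination h2
        rw [this, h4]
      rw [hcc, hdd]
    · rw [if_pos h1, if_neg h2] at h
      obtain ⟨_, hsnd⟩ := (Prod.mk.injEq _ _ _ _).mp h
      exfalso
      have : x⁻¹ * (b + d') = 0 := hsnd.symm
      rcases mul_eq_zero.mp this with h' | h'
      · exact inv_ne_zero hx0 h'
      · exact h2 h'
    · rw [if_neg h1, if_pos h2] at h
      obtain ⟨_, hsnd⟩ := (Prod.mk.injEq _ _ _ _).mp h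
      exfalso
      have : x⁻¹ * (b + d) = 0 := hsnd
      rcases mul_eq_zero.mp this with h' | h'
      · exact inv_ne_zero hx0 h'
      · exact h1 h'
    · rw [if_neg h1, if_neg h2] at h
      obtain ⟨ha, hsnd⟩ := (Prod.mk.injEq _ _ _ _).mp h
      have hcc : c = c' := mul_left_cancel₀ hx0 ha
      have hdd : d = d' := by
        have h3 : b + d = b + d' := mul_left_cancel₀ (inv_ne_zero hx0) hsnd
        linear_combination h3
      rw [hcc, hdd]
  have h1ne : (1 : ZMod p) ≠ 0 := one_ne_zero
  -- assembly
  refine ⟨part1, (1, d0), (0, 0), horb_line 1 h1ne, ?_, ?_, ⟨0, rfl⟩, ?_⟩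
  · rw [horb_line 1 h1ne, hcard_line]
  · rw [horbS, hcard_S]
  · rintro ⟨wc, wd⟩ hw
    by_cases hw2 : wd = d0
    · subst hw2
      by_cases hw1 : wc = 0
      · exfalso
        subst hw1
        have hfix : f (0, d0) = (0, d0) := (part1 (0, d0)).mpr rfl
        have horb1 : orbit f (0, d0) = {((0 : ZMod p), d0)} := by
          ext z
          simp only [orbit, Set.mem_setOf_eq, Set.mem_singleton_iff]
          constructor
          · rintro ⟨k, hk⟩
            rw [Function.iterate_fixed hfix] at hk
            exact hk.symm
          · rintro rfl
            exact ⟨0, rfl⟩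
        rw [horb1, Set.ncard_singleton] at hw
        omega
      · left
        rw [horb_line wc hw1, horb_line 1 h1ne]
    · right
      have hmem : (wc, wd) ∈ orbit f (0, 0) := by
        rw [horbS]
        exact hw2
      exact orbit_eq_orbit_of_mem hinj hmem
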